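/- Let k ≥ 1 and p ≥ 0 be fixed integers, and define the auxiliary operator H_{n,k}(f; x) = M_{n,k}(f; x) − f(x + ((1−k)/n)·x) + f(x). Then there exists a constant N_{p,k} > 0 such that for every integer n ≥ k + p + 2, every twice differentiable function g : [0,∞) → ℝ with g, g', g'' ∈ C_p, and every x > 0 (with x + ((1−k)/n)x ≥ 0), w_p(x)·|H_{n,k}(g; x) − g(x)| ≤ N_{p,k} · ‖g''‖_p · x²/n. -/

import Mathlib

open MeasureTheory Set

/-- The Gamma-type operator `M_{n,k}(f;x)`. -/
noncomputable def Mnk (n k : ℕ) (f : ℝ → ℝ) (x : ℝ) : ℝ :=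
  (((2 * n - k + 1).factorial : ℝ) * x ^ (n + 1) /
      ((n.factorial : ℝ) * ((n - k).factorial : ℝ))) *
    ∫ t in Ioi (0 : ℝ), t ^ (n - k) / (x + t) ^ (2 * n - k + 2) * f t

/-- The polynomial weight: `w_0 = 1`, `w_p(x) = 1/(1+x^p)` for `p ≥ 1`. -/
noncomputable def wp (p : ℕ) (x : ℝ) : ℝ := if p = 0 then 1 else 1 / (1 + x ^ p)

/-- The weighted sup-norm `‖f‖_p = sup_{x ≥ 0} w_p(x)|f(x)|`. -/
noncomputable def pNorm (p : ℕ) (f : ℝ → ℝ) : ℝ :=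
  ⨆ x : {x : ℝ // 0 ≤ x}, wp p x.val * |f x.val|

/-- Second symmetric difference `Δ_h² f`. -/
def Delta2 (h : ℝ) (f : ℝ → ℝ) (x : ℝ) : ℝ := f (x + 2 * h) - 2 * f (x + h) + f x

/-- Second weighted modulus of smoothness `ω_p²(f;δ)`. -/
noncomputable def omega2 (p : ℕ) (f : ℝ → ℝ) (δ : ℝ) : ℝ :=
  ⨆ h : {h : ℝ // 0 < h ∧ h ≤ δ}, pNorm p (Delta2 h.val f)

/-- First weighted modulus `ω_p¹(f;δ)`. -/
noncomputable def omega1 (p : ℕ) (f : ℝ → ℝ) (δ : ℝ) : ℝ :=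
  sSup {y : ℝ | ∃ t x : ℝ, 0 ≤ t ∧ 0 ≤ x ∧ |t - x| ≤ δ ∧ y = wp p x * |f t - f x|}

/-- Membership in the weighted space `C_p`: `w_p·f` is bounded and uniformly
continuous on `[0,∞)`. -/
def CpMem (p : ℕ) (f : ℝ → ℝ) : Prop :=
  (∃ B : ℝ, ∀ x ≥ (0 : ℝ), |wp p x * f x| ≤ B) ∧
    UniformContinuousOn (fun x => wp p x * f x) (Ici 0)

/-- Steklov mean `f_h`. -/
noncomputable def steklov (f : ℝ → ℝ) (h : ℝ) (x : ℝ) : ℝ :=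
  4 / h ^ 2 *
    ∫ s in (0 : ℝ)..(h / 2), ∫ t in (0 : ℝ)..(h / 2),
      (2 * f (x + s + t) - f (x + 2 * (s + t)))
open Filter Topology

section helpers

lemma integrable_inv_sq (x : ℝ) (hx : 0 < x) :
    IntegrableOn (fun t : ℝ => ((x + t) ^ 2)⁻¹) (Ioi 0) := by
  have hcont : ContinuousWithinAt (fun t : ℝ => -(x + t)⁻¹) (Ici 0) 0 := by
    apply ContinuousAt.continuousWithinAt
    have : (x + 0) ≠ 0 := by positivity
    fun_prop (disch := assumption)
  have hderiv : ∀ t ∈ Ioi (0:ℝ), HasDerivAt (fun t : ℝ => -(x + t)⁻¹) (((x + t) ^ 2)⁻¹) t := by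
    intro t ht
    have h1 : HasDerivAt (fun t : ℝ => x + t) 1 t := (hasDerivAt_id t).const_add x
    have hne : x + t ≠ 0 := by have := ht.out; positivity
    have := (h1.inv hne).neg
    refine this.congr_deriv ?_; symm
    field_simp
  have htend : Tendsto (fun t : ℝ => -(x + t)⁻¹) atTop (𝓝 0) := by
    rw [show (0:ℝ) = -0 by ring]
    exact ((tendsto_inv_atTop_zero.comp (tendsto_atTop_add_const_left _ x tendsto_id))).neg
  have := integrableOn_Ioi_deriv_of_nonneg hcont hderiv (fun t ht => by positivity) htend
  exact this

lemma kernel_integrable (x : ℝ) (hx : 0 < x) (m M : ℕ) (hM : m + 2 ≤ M) :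
    IntegrableOn (fun t : ℝ => t ^ m / (x + t) ^ M) (Ioi 0) := by
  obtain ⟨q, rfl⟩ : ∃ q, M = m + 2 + q := ⟨M - m - 2, by omega⟩
  have hmeas : AEStronglyMeasurable (fun t : ℝ => t ^ m / (x + t) ^ (m + 2 + q))
      (volume.restrict (Ioi 0)) := by
    apply ContinuousOn.aestronglyMeasurable _ measurableSet_Ioi
    apply ContinuousOn.div (by fun_prop) (by fun_prop)
    intro t ht
    have := ht.out
    positivity
  have hdom := (integrable_inv_sq x hx).const_mul ((1/x) ^ q)
  refine Integrable.mono hdom hmeas ?_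
  filter_upwards [ae_restrict_mem measurableSet_Ioi] with t ht
  have ht0 : (0:ℝ) < t := ht
  have hxt : (0:ℝ) < x + t := by positivity
  rw [Real.norm_eq_abs, Real.norm_eq_abs, abs_of_nonneg (by positivity),
    abs_of_nonneg (by positivity), div_le_iff₀ (by positivity)]
  calc t ^ m ≤ (x+t) ^ m := pow_le_pow_left₀ ht0.le (by linarith) m
    _ = (x+t)^m * 1 := (mul_one _).symm
    _ ≤ (x+t)^m * ((x+t)/x)^q := by
        apply mul_le_mul_of_nonneg_left _ (by positivity)
        apply one_le_pow₀
        rw [le_div_iff₀ hx, one_mul]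
        linarith
    _ = (1/x)^q * ((x + t) ^ 2)⁻¹ * (x+t)^(m+2+q) := by
        rw [pow_add, pow_add, div_pow, div_pow]
        field_simp
        ring

lemma kernel_integral (x : ℝ) (hx : 0 < x) :
    ∀ (m q : ℕ), ∫ t in Ioi (0:ℝ), t ^ m / (x + t) ^ (m + 2 + q)
      = (m.factorial * q.factorial : ℝ) / ((m + q + 1).factorial * x ^ (q + 1)) := by
  intro m
  induction m with
  | zero =>
    intro q
    have hne : ∀ t : ℝ, t ∈ Ioi (0:ℝ) → x + t ≠ 0 := fun t ht => by
      have := ht.out; positivity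
    have hderiv : ∀ t ∈ Ioi (0:ℝ),
        HasDerivAt (fun t : ℝ => -((x+t)^(q+1))⁻¹ / (q+1)) (t ^ 0 / (x + t) ^ (0 + 2 + q)) t := by
      intro t ht
      have h1 : HasDerivAt (fun t : ℝ => x + t) 1 t := (hasDerivAt_id t).const_add x
      have h2 := h1.pow (q+1)
      have hne2 : (x+t)^(q+1) ≠ 0 := by have := ht.out; positivity
      have h3 := ((h2.inv hne2).neg).div_const ((q:ℝ)+1)
      refine h3.congr_deriv ?_; symm
      have hxt : (0:ℝ) < x + t := by have := ht.out; positivity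
      simp only [Pi.pow_apply, Nat.add_sub_cancel, pow_zero, mul_one]
      push_cast
      field_simp
      ring
    have hcont : ContinuousWithinAt (fun t : ℝ => -((x+t)^(q+1))⁻¹ / (q+1)) (Ici 0) 0 := by
      apply ContinuousAt.continuousWithinAt
      have hne2 : (x+(0:ℝ))^(q+1) ≠ 0 := by positivity
      fun_prop (disch := assumption)
    have hint : IntegrableOn (fun t : ℝ => t ^ 0 / (x + t) ^ (0 + 2 + q)) (Ioi 0) :=
      kernel_integrable x hx 0 (0+2+q) (by omega)
    have htend : Tendsto (fun t : ℝ => -((x+t)^(q+1))⁻¹ / (q+1)) atTop (𝓝 0) := by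
      have h1 : Tendsto (fun t : ℝ => (x+t)^(q+1)) atTop atTop :=
        (tendsto_pow_atTop (by omega)).comp (tendsto_atTop_add_const_left _ x tendsto_id)
      have := (h1.inv_tendsto_atTop.neg).div_const ((q:ℝ)+1)
      simpa using this
    have key := integral_Ioi_of_hasDerivAt_of_tendsto hcont hderiv hint htend
    rw [key]
    have hq1 : ((q:ℝ)+1) ≠ 0 := by positivity
    rw [Nat.factorial_succ]
    field_simp
    push_cast
    ring
  | succ m ih =>
    intro q
    have hint1 : IntegrableOn (fun t : ℝ => t ^ m / (x + t) ^ (m + 2 + q)) (Ioi 0) :=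
      kernel_integrable x hx m _ (by omega)
    have hint2 : IntegrableOn (fun t : ℝ => t ^ (m+1) / (x + t) ^ (m + 1 + 2 + q)) (Ioi 0) :=
      kernel_integrable x hx (m+1) _ (by omega)
    set F : ℝ → ℝ := fun t => t^(m+1) * ((x+t)^(m+2+q))⁻¹ with hF
    set G : ℝ → ℝ := fun t => ((m:ℝ)+1) * (t^m/(x+t)^(m+2+q)) - ((m:ℝ)+2+q) * (t^(m+1)/(x+t)^(m+1+2+q)) with hG
    have hderiv : ∀ t ∈ Ioi (0:ℝ), HasDerivAt F (G t) t := by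
      intro t ht
      have hxt : (0:ℝ) < x + t := by have := ht.out; positivity
      have h1 : HasDerivAt (fun t : ℝ => x + t) 1 t := (hasDerivAt_id t).const_add x
      have h2 := h1.pow (m+2+q)
      have hne2 : (x+t)^(m+2+q) ≠ 0 := by positivity
      have h3 := (hasDerivAt_pow (m+1) t).mul (h2.inv hne2)
      refine h3.congr_deriv ?_; symm
      simp only [hG, Pi.pow_apply, Pi.inv_apply, Nat.add_sub_cancel, mul_one]
      rw [show m+1+2+q = (m+2+q)+1 by omega, show m+2+q-1 = m+1+q by omega]
      push_cast
      field_simp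
      ring
    have hcont : ContinuousWithinAt F (Ici 0) 0 := by
      apply ContinuousAt.continuousWithinAt
      have hne2 : (x+(0:ℝ))^(m+2+q) ≠ 0 := by positivity
      fun_prop (disch := assumption)
    have hintG : IntegrableOn G (Ioi 0) :=
      (hint1.const_mul _).sub (hint2.const_mul _)
    have htend : Tendsto F atTop (𝓝 0) := by
      have hup : Tendsto (fun t : ℝ => ((x+t)^(q+1))⁻¹) atTop (𝓝 0) :=
        Tendsto.inv_tendsto_atTop
          ((tendsto_pow_atTop (by omega)).comp (tendsto_atTop_add_const_left _ x tendsto_id))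
      apply tendsto_of_tendsto_of_tendsto_of_le_of_le' tendsto_const_nhds hup
      · filter_upwards [eventually_ge_atTop (0:ℝ)] with t ht
        have hxt : (0:ℝ) < x + t := by positivity
        positivity
      · filter_upwards [eventually_ge_atTop (0:ℝ)] with t ht
        have hxt : (0:ℝ) < x + t := by positivity
        have h1 : t^(m+1) ≤ (x+t)^(m+1) := pow_le_pow_left₀ ht (by linarith) _
        rw [hF]
        calc t^(m+1) * ((x+t)^(m+2+q))⁻¹ ≤ (x+t)^(m+1) * ((x+t)^(m+2+q))⁻¹ := by
              apply mul_le_mul_of_nonneg_right h1 (by positivity)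
          _ = ((x+t)^(q+1))⁻¹ := by
              rw [show m+2+q = (m+1)+(q+1) by omega, pow_add]
              field_simp
              rw [pow_add, pow_succ]
              ring
    have key := integral_Ioi_of_hasDerivAt_of_tendsto hcont hderiv hintG htend
    have hF0 : F 0 = 0 := by simp [hF]
    rw [hF0, sub_zero] at key
    have hsplit : ∫ t in Ioi (0:ℝ), G t
        = ((m:ℝ)+1) * (∫ t in Ioi (0:ℝ), t^m/(x+t)^(m+2+q))
          - ((m:ℝ)+2+q) * (∫ t in Ioi (0:ℝ), t^(m+1)/(x+t)^(m+1+2+q)) := by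
      rw [hG]
      rw [integral_sub (hint1.const_mul _) (hint2.const_mul _),
        integral_const_mul, integral_const_mul]
    rw [key, ih q] at hsplit
    have hsolve : ((m:ℝ)+2+q) * (∫ t in Ioi (0:ℝ), t^(m+1)/(x+t)^(m+1+2+q))
        = ((m:ℝ)+1) * ((m.factorial * q.factorial : ℝ) / ((m + q + 1).factorial * x ^ (q + 1))) := by
      linarith
    have hne3 : ((m:ℝ)+2+q) ≠ 0 := by positivity
    have heq : (∫ t in Ioi (0:ℝ), t^(m+1)/(x+t)^(m+1+2+q))
        = ((m:ℝ)+1) * ((m.factorial * q.factorial : ℝ) / ((m + q + 1).factorial * x ^ (q + 1))) / ((m:ℝ)+2+q) := by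
      field_simp at hsolve ⊢
      linarith
    rw [heq]
    rw [show m+1+q+1 = (m+q+1)+1 by omega, Nat.factorial_succ (m+q+1), Nat.factorial_succ m]
    have hfac : ((m+q+1).factorial : ℝ) ≠ 0 := by positivity
    have hxq : (x:ℝ)^(q+1) ≠ 0 := by positivity
    push_cast
    field_simp
    ring

lemma wp_pos (p : ℕ) (x : ℝ) (hx : 0 ≤ x) : 0 < wp p x := by
  unfold wp
  split
  · norm_num
  · have : (0:ℝ) < 1 + x ^ p := by positivity
    positivity

lemma pNorm_bddAbove (p : ℕ) (f : ℝ → ℝ) (h : CpMem p f) :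
    BddAbove (range fun v : {x : ℝ // 0 ≤ x} => wp p v.val * |f v.val|) := by
  obtain ⟨B, hB⟩ := h.1
  refine ⟨B, ?_⟩
  rintro y ⟨v, rfl⟩
  have h1 := hB v.val v.2
  have h2 : wp p v.val * |f v.val| = |wp p v.val * f v.val| := by
    rw [abs_mul, abs_of_pos (wp_pos p v.val v.2)]
  show wp p v.val * |f v.val| ≤ B
  rw [h2]; exact h1

lemma le_pNorm (p : ℕ) (f : ℝ → ℝ) (h : CpMem p f) (v : ℝ) (hv : 0 ≤ v) :
    wp p v * |f v| ≤ pNorm p f :=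
  le_ciSup (pNorm_bddAbove p f h) (⟨v, hv⟩ : {x : ℝ // 0 ≤ x})

lemma pNorm_nonneg (p : ℕ) (f : ℝ → ℝ) (h : CpMem p f) : 0 ≤ pNorm p f := by
  have := le_pNorm p f h 0 le_rfl
  have h2 : 0 ≤ wp p 0 * |f 0| := mul_nonneg (wp_pos p 0 le_rfl).le (abs_nonneg _)
  linarith

lemma abs_le_pNorm (p : ℕ) (f : ℝ → ℝ) (h : CpMem p f) (v : ℝ) (hv : 0 ≤ v) :
    |f v| ≤ pNorm p f * (1 + v ^ p) := by
  have h1 := le_pNorm p f h v hv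
  have hQ := pNorm_nonneg p f h
  unfold wp at h1
  by_cases hp : p = 0
  · subst hp
    simp at h1 ⊢
    nlinarith
  · rw [if_neg hp] at h1
    have hpos : (0:ℝ) < 1 + v ^ p := by positivity
    rw [div_mul_eq_mul_div, one_mul, div_le_iff₀ hpos] at h1
    nlinarith

lemma taylor_like_bound (p : ℕ) (g g' g'' : ℝ → ℝ)
    (hg : ∀ x ≥ (0:ℝ), HasDerivWithinAt g (g' x) (Ici 0) x)
    (hg' : ∀ x ≥ (0:ℝ), HasDerivWithinAt g' (g'' x) (Ici 0) x)
    (hC : CpMem p g'') (a t : ℝ) (ha : 0 ≤ a) (ht : 0 ≤ t) :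
    |g t - g a - g' a * (t - a)| ≤ pNorm p g'' * (1 + a ^ p + t ^ p) * (t - a) ^ 2 := by
  set Q := pNorm p g'' with hQdef
  have hQ := pNorm_nonneg p g'' hC
  set s : Set ℝ := Icc (min a t) (max a t) with hs
  have hsub : s ⊆ Ici 0 := by
    intro u hu
    have := hu.1
    have hm : (0:ℝ) ≤ min a t := le_min ha ht
    exact le_trans hm this
  have hconv : Convex ℝ s := convex_Icc _ _
  have has : a ∈ s := ⟨min_le_left _ _, le_max_left _ _⟩
  have hts : t ∈ s := ⟨min_le_right _ _, le_max_right _ _⟩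
  set C2 : ℝ := Q * (1 + a ^ p + t ^ p) with hC2
  have hC2nn : 0 ≤ C2 := by positivity
  -- bound on |g''| over s
  have hbound2 : ∀ v ∈ s, ‖g'' v‖ ≤ C2 := by
    intro v hv
    have hv0 : 0 ≤ v := hsub hv
    have h1 : |g'' v| ≤ Q * (1 + v ^ p) := abs_le_pNorm p g'' hC v hv0
    have h2 : v ^ p ≤ a ^ p + t ^ p := by
      have hvm : v ≤ max a t := hv.2
      have : v ^ p ≤ (max a t) ^ p := pow_le_pow_left₀ hv0 hvm p
      rcases le_total a t with hh | hh
      · rw [max_eq_right hh] at this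
        nlinarith [pow_nonneg ha p]
      · rw [max_eq_left hh] at this
        nlinarith [pow_nonneg ht p]
    rw [Real.norm_eq_abs]
    calc |g'' v| ≤ Q * (1 + v ^ p) := h1
      _ ≤ C2 := by rw [hC2]; nlinarith
  have hderiv1 : ∀ v ∈ s, HasDerivWithinAt g' (g'' v) s v :=
    fun v hv => (hg' v (hsub hv)).mono hsub
  have hstep1 : ∀ u ∈ s, |g' u - g' a| ≤ C2 * |u - a| := by
    intro u hu
    have := hconv.norm_image_sub_le_of_norm_hasDerivWithin_le hderiv1 hbound2 has hu
    simpa [Real.norm_eq_abs] using this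
  -- second step
  set F : ℝ → ℝ := fun u => g u - g a - g' a * (u - a) with hF
  have hderivF : ∀ u ∈ s, HasDerivWithinAt F (g' u - g' a) s u := by
    intro u hu
    have h1 : HasDerivWithinAt g (g' u) s u := (hg u (hsub hu)).mono hsub
    have h2 : HasDerivWithinAt (fun v : ℝ => g a + g' a * (v - a)) (g' a) s u := by
      have := (((hasDerivWithinAt_id u s).sub_const a).const_mul (g' a)).const_add (g a)
      simpa using this
    have := h1.sub h2
    have hFe : F = g - fun v => g a + g' a * (v - a) := by
      funext v; show g v - g a - g' a * (v - a) = g v - (g a + g' a * (v - a)); ring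
    rw [hFe]; exact this
  have hboundF : ∀ u ∈ s, ‖g' u - g' a‖ ≤ C2 * |t - a| := by
    intro u hu
    have h1 := hstep1 u hu
    have h2 : |u - a| ≤ |t - a| := by
      obtain ⟨hu1, hu2⟩ : min a t ≤ u ∧ u ≤ max a t := hu
      rcases le_total a t with hh | hh
      · rw [min_eq_left hh] at hu1
        rw [max_eq_right hh] at hu2
        rw [abs_of_nonneg (by linarith), abs_of_nonneg (by linarith)]
        linarith
      · rw [min_eq_right hh] at hu1
        rw [max_eq_left hh] at hu2
        rw [abs_of_nonpos (by linarith), abs_of_nonpos (by linarith)]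
        linarith
    rw [Real.norm_eq_abs]
    calc |g' u - g' a| ≤ C2 * |u - a| := h1
      _ ≤ C2 * |t - a| := by apply mul_le_mul_of_nonneg_left h2 hC2nn
  have hmain := hconv.norm_image_sub_le_of_norm_hasDerivWithin_le hderivF hboundF has hts
  have hFa : F a = 0 := by rw [hF]; ring
  rw [hFa, sub_zero, Real.norm_eq_abs, Real.norm_eq_abs] at hmain
  calc |g t - g a - g' a * (t - a)| = |F t| := rfl
    _ ≤ C2 * |t - a| * |t - a| := hmain
    _ = C2 * (t - a) ^ 2 := by rw [mul_assoc, ← abs_mul, ← sq, abs_of_nonneg (sq_nonneg _)]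
    _ = Q * (1 + a ^ p + t ^ p) * (t - a) ^ 2 := by rw [hC2]


lemma Kmom (n k j : ℕ) (hk : k ≤ n) (hj : j ≤ n) (x : ℝ) (hx : 0 < x) :
    IntegrableOn (fun t : ℝ => t ^ (n - k) / (x + t) ^ (2 * n - k + 2) * t ^ j) (Ioi 0) ∧
    (((2 * n - k + 1).factorial : ℝ) * x ^ (n + 1) /
        ((n.factorial : ℝ) * ((n - k).factorial : ℝ))) *
      ∫ t in Ioi (0:ℝ), t ^ (n - k) / (x + t) ^ (2 * n - k + 2) * t ^ j
    = (((n - k + j).factorial : ℝ) * ((n - j).factorial : ℝ)) /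
        ((n.factorial : ℝ) * ((n - k).factorial : ℝ)) * x ^ j := by
  have hfun : (fun t : ℝ => t ^ (n - k) / (x + t) ^ (2 * n - k + 2) * t ^ j)
      = fun t : ℝ => t ^ (n - k + j) / (x + t) ^ ((n - k + j) + 2 + (n - j)) := by
    funext t
    rw [show (n-k+j)+2+(n-j) = 2*n-k+2 by omega, pow_add]
    ring
  constructor
  · rw [hfun]; exact kernel_integrable x hx _ _ (by omega)
  · rw [hfun, kernel_integral x hx (n-k+j) (n-j)]
    rw [show (n-k+j)+(n-j)+1 = 2*n-k+1 by omega]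
    have h1 : ((2*n-k+1).factorial : ℝ) ≠ 0 := by positivity
    have h2 : ((n).factorial : ℝ) ≠ 0 := by positivity
    have h3 : ((n-k).factorial : ℝ) ≠ 0 := by positivity
    have hxne : x ≠ 0 := ne_of_gt hx
    rw [show n+1 = (n-j+1)+j by omega, pow_add]
    field_simp

end helpers


set_option maxHeartbeats 2000000 in
/-- Estimate for the auxiliary operator
`H_{n,k}(g;x) = M_{n,k}(g;x) − g(x+((1−k)/n)x) + g(x)` on twice differentiable
functions: `w_p(x)|H_{n,k}(g;x) − g(x)| ≤ N_{p,k}·‖g''‖_p·x²/n`. -/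
theorem Hnk_estimate_C2 (k p : ℕ) (hk : 1 ≤ k) :
    ∃ N > (0 : ℝ), ∀ n : ℕ, k + p + 2 ≤ n → ∀ g g' g'' : ℝ → ℝ,
      (∀ x ≥ (0 : ℝ), HasDerivWithinAt g (g' x) (Ici 0) x) →
      (∀ x ≥ (0 : ℝ), HasDerivWithinAt g' (g'' x) (Ici 0) x) →
      CpMem p g → CpMem p g' → CpMem p g'' →
      ∀ x : ℝ, 0 < x → 0 ≤ x + (1 - (k : ℝ)) / (n : ℝ) * x →
        wp p x *
            |(Mnk n k g x - g (x + (1 - (k : ℝ)) / (n : ℝ) * x) + g x) - g x| ≤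
          N * pNorm p g'' * x ^ 2 / (n : ℝ) := by
  obtain ⟨D, hD, hD0⟩ : ∃ D : ℝ, D = ((k:ℝ) + 2*(p:ℝ) + 3) * ((p:ℝ) + 2) ∧ 0 < D :=
    ⟨_, rfl, by positivity⟩
  have hD1 : (1:ℝ) ≤ 1 + D := by linarith
  obtain ⟨Ab, hAb, hAb0⟩ : ∃ A : ℝ, A = 4 * D * (1 + D)^(p+1) ∧ 0 < A :=
    ⟨_, rfl, by positivity⟩
  refine ⟨3 * Ab, by positivity, ?_⟩
  intro n hn g g' g'' hg hg' hCg hCg' hCg'' x hx _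
  have hkn : k ≤ n := by omega
  have hν0 : (0:ℝ) < (n:ℝ) := by exact_mod_cast (by omega : 0 < n)
  have hνk : (k:ℝ) + (p:ℝ) + 2 ≤ (n:ℝ) := by exact_mod_cast hn
  have hk1 : (1:ℝ) ≤ (k:ℝ) := by exact_mod_cast hk
  have hp0 : (0:ℝ) ≤ (p:ℝ) := p.cast_nonneg
  obtain ⟨ν, hν⟩ : ∃ ν : ℝ, ν = (n:ℝ) := ⟨_, rfl⟩
  rw [← hν] at hν0 hνk ⊢
  obtain ⟨c, hc⟩ : ∃ c : ℕ → ℝ, c = fun j => (((n - k + j).factorial : ℝ) * ((n - j).factorial : ℝ)) /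
      ((n.factorial : ℝ) * ((n - k).factorial : ℝ)) := ⟨_, rfl⟩
  obtain ⟨r, hr⟩ : ∃ r : ℕ → ℝ, r = fun (j:ℕ) => (ν - (k:ℝ) + 1 + (j:ℝ)) / (ν - (j:ℝ)) := ⟨_, rfl⟩
  have hc_nonneg : ∀ j, 0 ≤ c j := by
    intro j; rw [hc]; simp only []
    have h2 : (0:ℝ) < (n.factorial : ℝ) := by positivity
    positivity
  have hfacn : ((n.factorial : ℕ) : ℝ) ≠ 0 := by positivity
  have hfacnk : (((n-k).factorial : ℕ) : ℝ) ≠ 0 := by positivity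
  have hc0 : c 0 = 1 := by
    rw [hc]
    simp only [Nat.add_zero, Nat.sub_zero]
    field_simp
  have hrec : ∀ j, j + 1 ≤ n → c (j+1) = c j * r j := by
    intro j hj
    obtain ⟨u, hu⟩ : ∃ u, n - j = u + 1 := ⟨n - j - 1, by omega⟩
    have h1 : n - (j+1) = u := by omega
    have h2 : n - k + (j+1) = (n - k + j) + 1 := by omega
    have e1 : ν - (j:ℝ) = (u:ℝ) + 1 := by
      rw [hν]
      have : ((n - j : ℕ) : ℝ) = (n:ℝ) - (j:ℝ) := by rw [Nat.cast_sub (by omega)]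
      rw [← this, hu]
      push_cast
      ring
    have e2 : ν - (k:ℝ) + 1 + (j:ℝ) = ((n - k + j : ℕ) : ℝ) + 1 := by
      rw [hν]
      push_cast [Nat.cast_sub hkn]
      ring
    rw [hc, hr]
    simp only [h1, h2, hu, Nat.factorial_succ]
    rw [e1, e2]
    have hu1 : ((u:ℝ) + 1) ≠ 0 := by positivity
    field_simp
    push_cast
    ring
  have hrb : ∀ j : ℕ, j ≤ p + 1 → 0 ≤ r j ∧ r j ≤ 1 + D ∧ |r j - 1| ≤ D / ν := by
    intro j hj
    have hjr : (j:ℝ) ≤ (p:ℝ) + 1 := by exact_mod_cast hj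
    have hj0 : (0:ℝ) ≤ (j:ℝ) := j.cast_nonneg
    have hνj : (0:ℝ) < ν - (j:ℝ) := by linarith
    have hnum : (0:ℝ) < ν - (k:ℝ) + 1 + (j:ℝ) := by linarith
    have h0 : 0 ≤ r j := by rw [hr]; positivity
    have hd : r j - 1 = ((1:ℝ) + 2*(j:ℝ) - (k:ℝ)) / (ν - (j:ℝ)) := by
      rw [hr]
      field_simp
      ring
    have habs : |r j - 1| ≤ D / ν := by
      rw [hd, abs_div, abs_of_pos hνj]
      have h1 : |(1:ℝ) + 2*(j:ℝ) - (k:ℝ)| ≤ (k:ℝ) + 2*(p:ℝ) + 3 := by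
        rw [abs_le]
        constructor <;> nlinarith
      calc |(1:ℝ) + 2*(j:ℝ) - (k:ℝ)| / (ν - (j:ℝ))
          ≤ ((k:ℝ) + 2*(p:ℝ) + 3) / (ν - (j:ℝ)) := by gcongr
        _ ≤ D / ν := by
            rw [hD, div_le_div_iff₀ hνj hν0]
            have hinner : (0:ℝ) ≤ ((p:ℝ)+2)*(ν-(j:ℝ)) - ν := by
              nlinarith [mul_le_mul_of_nonneg_left hjr (show (0:ℝ) ≤ (p:ℝ)+2 by linarith),
                mul_le_mul_of_nonneg_left (show (p:ℝ)+3 ≤ ν by linarith)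
                  (show (0:ℝ) ≤ (p:ℝ)+1 by linarith)]
            nlinarith [mul_nonneg (show (0:ℝ) ≤ (k:ℝ)+2*(p:ℝ)+3 by linarith) hinner]
    refine ⟨h0, ?_, habs⟩
    have h2 := (abs_le.mp habs).2
    have hDν : D / ν ≤ D := div_le_self hD0.le (by linarith)
    linarith
  have hrdiff : ∀ i j : ℕ, i ≤ p + 1 → j ≤ p + 1 → |r i - r j| ≤ 2*D/ν := by
    intro i j hi hj
    have h1 := (hrb i hi).2.2
    have h2 := (hrb j hj).2.2
    have h3 := abs_sub_le (r i) 1 (r j)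
    rw [abs_sub_comm 1 (r j)] at h3
    have h4 : 2*D/ν = D/ν + D/ν := by ring
    linarith
  have hcle : ∀ j, j ≤ p + 1 → c j ≤ (1+D)^j := by
    intro j
    induction j with
    | zero => intro _; rw [hc0, pow_zero]
    | succ j ih =>
      intro hj
      rw [hrec j (by omega)]
      have h1 := ih (by omega)
      have h2 := hrb j (by omega)
      calc c j * r j ≤ (1+D)^j * (1+D) :=
            mul_le_mul h1 h2.2.1 h2.1 (by positivity)
        _ = (1+D)^(j+1) := (pow_succ _ _).symm
  have hc1 : c 1 = r 0 := by rw [hrec 0 (by omega), hc0, one_mul]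
  have hpow1 : (1+D) ≤ (1+D)^(p+1) := le_self_pow₀ hD1 (by omega)
  have hE2 : c 2 - (c 1)^2 ≤ Ab / ν := by
    have h2 : c 2 = c 1 * r 1 := hrec 1 (by omega)
    have hr0 := hrb 0 (by omega)
    have hr1 := hrb 1 (by omega)
    have hd01 := hrdiff 1 0 (by omega) (by omega)
    have key : c 2 - (c 1)^2 = r 0 * (r 1 - r 0) := by rw [h2, hc1]; ring
    rw [key]
    calc r 0 * (r 1 - r 0) ≤ r 0 * |r 1 - r 0| := by
          apply mul_le_mul_of_nonneg_left (le_abs_self _) hr0.1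
      _ ≤ (1+D) * (2*D/ν) := by
          apply mul_le_mul hr0.2.1 hd01 (abs_nonneg _) (by linarith)
      _ ≤ Ab / ν := by
          have h24 : 2*D*(1+D) ≤ Ab := by
            rw [hAb]
            nlinarith [mul_le_mul_of_nonneg_left hpow1 (show (0:ℝ) ≤ 2*D by linarith)]
          have he : (1+D)*(2*D/ν) = (2*D*(1+D))/ν := by ring
          rw [he]
          gcongr
  have hEp : c (p+2) - 2 * c 1 * c (p+1) + (c 1)^2 * c p ≤ Ab / ν := by
    have h1 : c (p+1) = c p * r p := hrec p (by omega)
    have h2 : c (p+2) = c (p+1) * r (p+1) := hrec (p+1) (by omega)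
    have hr0 := hrb 0 (by omega)
    have hrp := hrb p (by omega)
    have hrp1 := hrb (p+1) (by omega)
    have hdp1 := hrdiff (p+1) 0 (by omega) (by omega)
    have hdp := hrdiff p 0 (by omega) (by omega)
    have hcp := hcle p (by omega)
    have hcpn := hc_nonneg p
    have key : c (p+2) - 2 * c 1 * c (p+1) + (c 1)^2 * c p
        = c p * (r p * (r (p+1) - r 0) - r 0 * (r p - r 0)) := by
      rw [h2, h1, hc1]; ring
    rw [key]
    have hin : r p * (r (p+1) - r 0) - r 0 * (r p - r 0) ≤ 4*D*(1+D)/ν := by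
      have t1 : r p * (r (p+1) - r 0) ≤ (1+D) * (2*D/ν) := by
        calc r p * (r (p+1) - r 0) ≤ r p * |r (p+1) - r 0| := by
              apply mul_le_mul_of_nonneg_left (le_abs_self _) hrp.1
          _ ≤ (1+D) * (2*D/ν) := by
              apply mul_le_mul hrp.2.1 hdp1 (abs_nonneg _) (by linarith)
      have t2 : - (r 0 * (r p - r 0)) ≤ (1+D) * (2*D/ν) := by
        calc - (r 0 * (r p - r 0)) = r 0 * (r 0 - r p) := by ring
          _ ≤ r 0 * |r 0 - r p| := by
              apply mul_le_mul_of_nonneg_left (le_abs_self _) hr0.1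
          _ ≤ (1+D) * (2*D/ν) := by
              rw [abs_sub_comm]
              apply mul_le_mul hr0.2.1 hdp (abs_nonneg _) (by linarith)
      have : (1+D) * (2*D/ν) + (1+D) * (2*D/ν) = 4*D*(1+D)/ν := by ring
      linarith
    calc c p * (r p * (r (p+1) - r 0) - r 0 * (r p - r 0))
        ≤ c p * (4*D*(1+D)/ν) := by
          apply mul_le_mul_of_nonneg_left hin hcpn
      _ ≤ (1+D)^p * (4*D*(1+D)/ν) := by
          apply mul_le_mul_of_nonneg_right hcp (by positivity)
      _ = 4*D*(1+D)^(p+1)/ν := by rw [pow_succ]; ring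
      _ = Ab / ν := by rw [hAb]

  -- ===== analytic part =====
  obtain ⟨K, hK⟩ : ∃ K : ℝ → ℝ, K = fun t : ℝ => t ^ (n - k) / (x + t) ^ (2 * n - k + 2) :=
    ⟨_, rfl⟩
  obtain ⟨Cn, hCn⟩ : ∃ Cn : ℝ, Cn = ((2 * n - k + 1).factorial : ℝ) * x ^ (n + 1) /
      ((n.factorial : ℝ) * ((n - k).factorial : ℝ)) := ⟨_, rfl⟩
  have hCnpos : 0 < Cn := by
    rw [hCn]
    have h1 : (0:ℝ) < ((2*n-k+1).factorial : ℝ) := by positivity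
    positivity
  have hmom : ∀ j, j ≤ n → IntegrableOn (fun t : ℝ => K t * t ^ j) (Ioi 0) ∧
      Cn * ∫ t in Ioi (0:ℝ), K t * t ^ j = c j * x ^ j := by
    intro j hj
    have hkm := Kmom n k j hkn hj x hx
    constructor
    · rw [hK]
      exact hkm.1
    · rw [hK, hCn, hc]
      exact hkm.2
  have hintψ : ∀ j, j ≤ n → IntegrableOn (fun t : ℝ => K t * t ^ j) (Ioi 0) :=
    fun j hj => (hmom j hj).1
  have hvalψ : ∀ j, j ≤ n → Cn * ∫ t in Ioi (0:ℝ), K t * t ^ j = c j * x ^ j :=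
    fun j hj => (hmom j hj).2
  obtain ⟨A, hA⟩ : ∃ A : ℝ, A = c 1 * x := ⟨_, rfl⟩
  have hνne : ν ≠ 0 := ne_of_gt hν0
  have hc1v : c 1 = (ν - (k:ℝ) + 1) / ν := by
    rw [hc1, hr]; norm_num
  have hAarg : x + (1 - (k:ℝ)) / ν * x = A := by
    rw [hA, hc1v]
    field_simp
    ring
  have hA0 : 0 ≤ A := by
    rw [hA, hc1v]
    have h1 : (0:ℝ) ≤ (ν - (k:ℝ) + 1) / ν := div_nonneg (by linarith) hν0.le
    positivity
  have hAx : A ≤ x := by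
    rw [hA, hc1v]
    have h1 : (ν - (k:ℝ) + 1) / ν ≤ 1 := by
      rw [div_le_one hν0]; linarith
    exact mul_le_of_le_one_left hx.le h1
  obtain ⟨Q, hQ⟩ : ∃ Q : ℝ, Q = pNorm p g'' := ⟨_, rfl⟩
  have hQ0 : 0 ≤ Q := by rw [hQ]; exact pNorm_nonneg p g'' hCg''
  have hgcont : ContinuousOn g (Ici 0) := fun v hv => (hg v hv).continuousWithinAt
  have hKcont : ContinuousOn K (Ioi 0) := by
    rw [hK]
    apply ContinuousOn.div (by fun_prop) (by fun_prop)
    intro t ht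
    have := ht.out
    positivity
  have hS_int : IntegrableOn (fun t => K t * g t) (Ioi 0) := by
    have hmeas : AEStronglyMeasurable (fun t => K t * g t) (volume.restrict (Ioi 0)) :=
      (hKcont.mul (hgcont.mono Ioi_subset_Ici_self)).aestronglyMeasurable measurableSet_Ioi
    have hQg := pNorm_nonneg p g hCg
    have hdom : Integrable (fun t => pNorm p g * (K t * t ^ 0 + K t * t ^ p))
        (volume.restrict (Ioi 0)) :=
      Integrable.const_mul ((hintψ 0 (by omega)).add (hintψ p (by omega))) _
    refine Integrable.mono hdom hmeas ?_
    filter_upwards [ae_restrict_mem measurableSet_Ioi] with t ht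
    have ht0 : (0:ℝ) < t := ht
    have hKnn : 0 ≤ K t := by rw [hK]; positivity
    have hgb := abs_le_pNorm p g hCg t ht0.le
    have htp : (0:ℝ) ≤ t ^ p := by positivity
    have h1 : 0 ≤ pNorm p g * (K t * t ^ 0 + K t * t ^ p) := by
      apply mul_nonneg hQg
      have h2 : (0:ℝ) ≤ K t * t ^ 0 := by rw [pow_zero]; nlinarith
      nlinarith
    rw [Real.norm_eq_abs, Real.norm_eq_abs, abs_mul, abs_of_nonneg h1, abs_of_nonneg hKnn]
    calc K t * |g t| ≤ K t * (pNorm p g * (1 + t ^ p)) :=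
          mul_le_mul_of_nonneg_left hgb hKnn
      _ = pNorm p g * (K t * t ^ 0 + K t * t ^ p) := by rw [pow_zero]; ring
  obtain ⟨R, hR⟩ : ∃ R : ℝ → ℝ, R = fun t => g t - g A - g' A * (t - A) := ⟨_, rfl⟩
  have i00 : Integrable (fun t => g A * (K t * t ^ 0)) (volume.restrict (Ioi 0)) :=
    (hintψ 0 (by omega)).const_mul _
  have i11 : Integrable (fun t => g' A * (K t * t ^ 1)) (volume.restrict (Ioi 0)) :=
    (hintψ 1 (by omega)).const_mul _
  have i01 : Integrable (fun t => (g' A * A) * (K t * t ^ 0)) (volume.restrict (Ioi 0)) :=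
    (hintψ 0 (by omega)).const_mul _
  have iSa : Integrable (fun t => K t * g t - g A * (K t * t ^ 0)) (volume.restrict (Ioi 0)) :=
    hS_int.sub i00
  have iSb : Integrable (fun t => (K t * g t - g A * (K t * t ^ 0)) - g' A * (K t * t ^ 1))
      (volume.restrict (Ioi 0)) := iSa.sub i11
  have hKR_eq : (fun t => K t * R t) = fun t =>
      (K t * g t - g A * (K t * t ^ 0)) - g' A * (K t * t ^ 1)
        + (g' A * A) * (K t * t ^ 0) := by
    funext t
    rw [hR]
    simp only [pow_zero, pow_one]
    ring
  have hKR_int : IntegrableOn (fun t => K t * R t) (Ioi 0) := by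
    rw [hKR_eq]
    exact iSb.add i01
  have hKR_val : ∫ t in Ioi (0:ℝ), K t * R t
      = (∫ t in Ioi (0:ℝ), K t * g t) - g A * (∫ t in Ioi (0:ℝ), K t * t ^ 0)
        - g' A * (∫ t in Ioi (0:ℝ), K t * t ^ 1)
        + (g' A * A) * (∫ t in Ioi (0:ℝ), K t * t ^ 0) := by
    rw [hKR_eq, integral_add iSb i01, integral_sub iSa i11, integral_sub hS_int i00,
      integral_const_mul, integral_const_mul, integral_const_mul]
  have hkey : Cn * (∫ t in Ioi (0:ℝ), K t * g t) - g A = Cn * ∫ t in Ioi (0:ℝ), K t * R t := by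
    have h0 : Cn * (∫ t in Ioi (0:ℝ), K t * t ^ 0) = 1 := by
      rw [hvalψ 0 (by omega), hc0, pow_zero, one_mul]
    have h1 : Cn * (∫ t in Ioi (0:ℝ), K t * t ^ 1) = A := by
      rw [hvalψ 1 (by omega), pow_one, ← hA]
    rw [hKR_val]
    linear_combination (g A - g' A * A) * h0 + g' A * h1
  -- the dominating function Φ
  obtain ⟨Φ, hΦ⟩ : ∃ Φ : ℝ → ℝ, Φ = fun t =>
      Q*(1+A^p) * (K t * t^2) + (-(2*A*Q*(1+A^p))) * (K t * t^1) + (Q*(1+A^p)*A^2) * (K t * t^0)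
      + Q * (K t * t^(p+2)) + (-(2*A*Q)) * (K t * t^(p+1)) + (Q*A^2) * (K t * t^p) := ⟨_, rfl⟩
  have hpt : ∀ t ∈ Ioi (0:ℝ), |K t * R t| ≤ Φ t := by
    intro t ht
    have ht0 : (0:ℝ) < t := ht
    have hKnn : 0 ≤ K t := by rw [hK]; positivity
    have htay := taylor_like_bound p g g' g'' hg hg' hCg'' A t hA0 ht0.le
    rw [abs_mul, abs_of_nonneg hKnn]
    calc K t * |R t| ≤ K t * (Q * (1 + A^p + t^p) * (t - A)^2) := by
          apply mul_le_mul_of_nonneg_left _ hKnn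
          rw [hR, hQ]
          exact htay
      _ = Φ t := by
          rw [hΦ]
          simp only [pow_zero, pow_one]
          rw [pow_add t p 2, pow_add t p 1]
          ring
  have j2 : Integrable (fun t => Q*(1+A^p) * (K t * t^2)) (volume.restrict (Ioi 0)) :=
    (hintψ 2 (by omega)).const_mul _
  have j1 : Integrable (fun t => (-(2*A*Q*(1+A^p))) * (K t * t^1)) (volume.restrict (Ioi 0)) :=
    (hintψ 1 (by omega)).const_mul _
  have j0 : Integrable (fun t => (Q*(1+A^p)*A^2) * (K t * t^0)) (volume.restrict (Ioi 0)) :=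
    (hintψ 0 (by omega)).const_mul _
  have jp2 : Integrable (fun t => Q * (K t * t^(p+2))) (volume.restrict (Ioi 0)) :=
    (hintψ (p+2) (by omega)).const_mul _
  have jp1 : Integrable (fun t => (-(2*A*Q)) * (K t * t^(p+1))) (volume.restrict (Ioi 0)) :=
    (hintψ (p+1) (by omega)).const_mul _
  have jp : Integrable (fun t => (Q*A^2) * (K t * t^p)) (volume.restrict (Ioi 0)) :=
    (hintψ p (by omega)).const_mul _
  have s2 : Integrable (fun t => Q*(1+A^p) * (K t * t^2) + (-(2*A*Q*(1+A^p))) * (K t * t^1))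
      (volume.restrict (Ioi 0)) := j2.add j1
  have s3 : Integrable (fun t => Q*(1+A^p) * (K t * t^2) + (-(2*A*Q*(1+A^p))) * (K t * t^1)
      + (Q*(1+A^p)*A^2) * (K t * t^0)) (volume.restrict (Ioi 0)) := s2.add j0
  have s4 : Integrable (fun t => Q*(1+A^p) * (K t * t^2) + (-(2*A*Q*(1+A^p))) * (K t * t^1)
      + (Q*(1+A^p)*A^2) * (K t * t^0) + Q * (K t * t^(p+2))) (volume.restrict (Ioi 0)) :=
    s3.add jp2
  have s5 : Integrable (fun t => Q*(1+A^p) * (K t * t^2) + (-(2*A*Q*(1+A^p))) * (K t * t^1)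
      + (Q*(1+A^p)*A^2) * (K t * t^0) + Q * (K t * t^(p+2)) + (-(2*A*Q)) * (K t * t^(p+1)))
      (volume.restrict (Ioi 0)) := s4.add jp1
  have hΦ_int : IntegrableOn Φ (Ioi 0) := by
    rw [hΦ]
    exact s5.add jp
  have habs2 : |∫ t in Ioi (0:ℝ), K t * R t| ≤ ∫ t in Ioi (0:ℝ), Φ t := by
    calc |∫ t in Ioi (0:ℝ), K t * R t| ≤ ∫ t in Ioi (0:ℝ), |K t * R t| := by
          simpa only [Real.norm_eq_abs] using
            norm_integral_le_integral_norm (μ := volume.restrict (Ioi 0))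
              (fun t => K t * R t)
      _ ≤ ∫ t in Ioi (0:ℝ), Φ t :=
          setIntegral_mono_on hKR_int.abs hΦ_int measurableSet_Ioi hpt
  obtain ⟨I2, hI2⟩ : ∃ v : ℝ, v = ∫ t in Ioi (0:ℝ), K t * t ^ 2 := ⟨_, rfl⟩
  obtain ⟨I1, hI1⟩ : ∃ v : ℝ, v = ∫ t in Ioi (0:ℝ), K t * t ^ 1 := ⟨_, rfl⟩
  obtain ⟨I0, hI0⟩ : ∃ v : ℝ, v = ∫ t in Ioi (0:ℝ), K t * t ^ 0 := ⟨_, rfl⟩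
  obtain ⟨Jp2, hJp2⟩ : ∃ v : ℝ, v = ∫ t in Ioi (0:ℝ), K t * t ^ (p+2) := ⟨_, rfl⟩
  obtain ⟨Jp1, hJp1⟩ : ∃ v : ℝ, v = ∫ t in Ioi (0:ℝ), K t * t ^ (p+1) := ⟨_, rfl⟩
  obtain ⟨Jp, hJp⟩ : ∃ v : ℝ, v = ∫ t in Ioi (0:ℝ), K t * t ^ p := ⟨_, rfl⟩
  have hCnne : Cn ≠ 0 := ne_of_gt hCnpos
  have e2 : I2 = c 2 * x ^ 2 / Cn := by
    rw [eq_div_iff hCnne, hI2]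
    linear_combination hvalψ 2 (by omega)
  have e1 : I1 = c 1 * x ^ 1 / Cn := by
    rw [eq_div_iff hCnne, hI1]
    linear_combination hvalψ 1 (by omega)
  have e0 : I0 = c 0 * x ^ 0 / Cn := by
    rw [eq_div_iff hCnne, hI0]
    linear_combination hvalψ 0 (by omega)
  have ep2 : Jp2 = c (p+2) * x ^ (p+2) / Cn := by
    rw [eq_div_iff hCnne, hJp2]
    linear_combination hvalψ (p+2) (by omega)
  have ep1 : Jp1 = c (p+1) * x ^ (p+1) / Cn := by
    rw [eq_div_iff hCnne, hJp1]
    linear_combination hvalψ (p+1) (by omega)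
  have ep : Jp = c p * x ^ p / Cn := by
    rw [eq_div_iff hCnne, hJp]
    linear_combination hvalψ p (by omega)
  have hIadd : ∫ t in Ioi (0:ℝ), Φ t
      = Q*(1+A^p) * I2 + (-(2*A*Q*(1+A^p))) * I1 + (Q*(1+A^p)*A^2) * I0
        + Q * Jp2 + (-(2*A*Q)) * Jp1 + (Q*A^2) * Jp := by
    rw [hΦ, integral_add s5 jp, integral_add s4 jp1, integral_add s3 jp2, integral_add s2 j0,
      integral_add j2 j1, integral_const_mul, integral_const_mul, integral_const_mul,
      integral_const_mul, integral_const_mul, integral_const_mul,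
      ← hI2, ← hI1, ← hI0, ← hJp2, ← hJp1, ← hJp]
  have hΦ_val : Cn * ∫ t in Ioi (0:ℝ), Φ t
      = Q*((1+A^p)*(c 2 - (c 1)^2)*x^2
          + (c (p+2) - 2*c 1*c (p+1) + (c 1)^2*c p)*x^(p+2)) := by
    rw [hIadd, e2, e1, e0, ep2, ep1, ep, hA, hc0]
    field_simp
    ring
  -- weight estimates
  have hwp_pos : 0 < wp p x := wp_pos p x hx.le
  have hwp1 : wp p x * (1 + A^p) ≤ 2 := by
    unfold wp
    by_cases hp : p = 0
    · subst hp; norm_num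
    · rw [if_neg hp]
      have hxp : (0:ℝ) < 1 + x ^ p := by positivity
      have hap : A ^ p ≤ x ^ p := pow_le_pow_left₀ hA0 hAx p
      rw [div_mul_eq_mul_div, one_mul, div_le_iff₀ hxp]
      have hxpn : (0:ℝ) ≤ x ^ p := pow_nonneg hx.le p
      linarith only [hap, hxpn]
  have hwp2 : wp p x * x ^ p ≤ 1 := by
    unfold wp
    by_cases hp : p = 0
    · subst hp; norm_num
    · rw [if_neg hp]
      have hxp : (0:ℝ) < 1 + x ^ p := by positivity
      rw [div_mul_eq_mul_div, one_mul, div_le_one hxp]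
      linarith only [pow_nonneg hx.le p]
  -- final assembly
  rw [hAarg]
  have hgoal1 : Mnk n k g x - g A + g x - g x = Cn * (∫ t in Ioi (0:ℝ), K t * g t) - g A := by
    rw [hK, hCn]
    unfold Mnk
    ring
  rw [hgoal1, hkey, ← hQ]
  calc wp p x * |Cn * ∫ t in Ioi (0:ℝ), K t * R t|
      = wp p x * (Cn * |∫ t in Ioi (0:ℝ), K t * R t|) := by
        rw [abs_mul, abs_of_nonneg hCnpos.le]
    _ ≤ wp p x * (Cn * ∫ t in Ioi (0:ℝ), Φ t) := by
        apply mul_le_mul_of_nonneg_left _ hwp_pos.le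
        exact mul_le_mul_of_nonneg_left habs2 hCnpos.le
    _ = wp p x * (Q*((1+A^p)*(c 2 - (c 1)^2)*x^2
          + (c (p+2) - 2*c 1*c (p+1) + (c 1)^2*c p)*x^(p+2))) := by rw [hΦ_val]
    _ ≤ wp p x * (Q*((1+A^p)*(Ab/ν)*x^2 + (Ab/ν)*x^(p+2))) := by
        apply mul_le_mul_of_nonneg_left _ hwp_pos.le
        apply mul_le_mul_of_nonneg_left _ hQ0
        have t1 : (1+A^p)*(c 2 - (c 1)^2)*x^2 ≤ (1+A^p)*(Ab/ν)*x^2 := by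
          apply mul_le_mul_of_nonneg_right _ (sq_nonneg x)
          apply mul_le_mul_of_nonneg_left hE2 (by positivity)
        have t2 : (c (p+2) - 2*c 1*c (p+1) + (c 1)^2*c p)*x^(p+2) ≤ (Ab/ν)*x^(p+2) := by
          apply mul_le_mul_of_nonneg_right hEp (by positivity)
        linarith only [t1, t2]
    _ = Q * (Ab/ν) * x^2 * (wp p x * (1+A^p) + wp p x * x^p) := by
        rw [pow_add]
        ring
    _ ≤ Q * (Ab/ν) * x^2 * 3 := by
        apply mul_le_mul_of_nonneg_left _ (by positivity)
        linarith only [hwp1, hwp2]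
    _ = 3 * Ab * Q * x ^ 2 / ν := by ring
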